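/- For n ≥ 1 indeterminates x_1,...,x_{n+1}: (x_1+...+x_{n+1})^n equals the sum over plane rooted trees T on n+1 vertices and permutations σ ∈ S_{n+1} assigning labels to vertices, of x_{σ(root)}^{deg(root)} / deg(root)! times the product over non-root vertices v of x_{σ(v)}^{deg(v)-1} / (deg(v)-1)!. -/

import Mathlib

/-- A plane rooted tree: a root together with a linearly ordered list of
plane rooted subtrees. -/
inductive PlaneTree : Type
  | node : List PlaneTree → PlaneTree

namespace PlaneTree

mutual
  /-- The list, in depth-first (preorder) traversal order, of the numbers of
  children of the vertices of a plane rooted tree.  Note that for the root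
  `deg(root)` equals its number of children, while for every other vertex
  `deg(v) - 1` equals its number of children. -/
  def childCounts : PlaneTree → List ℕ
    | node ts => ts.length :: childCountsList ts
  /-- Auxiliary: concatenated child-count lists of a forest. -/
  def childCountsList : List PlaneTree → List ℕ
    | [] => []
    | t :: ts => childCounts t ++ childCountsList ts
end

/-- The number of vertices of a plane rooted tree. -/
def size (T : PlaneTree) : ℕ := T.childCounts.length

end PlaneTree

namespace PlaneTree

/-- forest property -/
def FP (j : ℕ) (l : List ℕ) : Prop :=
  l.sum + j = l.length ∧ ∀ k < l.length, k < (l.take k).sum + j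

theorem ccl_eq_nil : ∀ {ts : List PlaneTree}, childCountsList ts = [] → ts = []
  | [], _ => rfl
  | t :: ts, h => by rcases t with ⟨us⟩; simp [childCountsList, childCounts] at h

theorem fp_append {A B : List ℕ} {j : ℕ} (hA : FP 1 A) (hB : FP j B)
    (hne : B ≠ [] → 1 ≤ j) : FP (j + 1) (A ++ B) := by
  obtain ⟨a1, a2⟩ := hA
  obtain ⟨b1, b2⟩ := hB
  constructor
  · simp only [List.sum_append, List.length_append]; omega
  · intro k hk
    simp only [List.length_append] at hk
    rcases le_or_gt k A.length with h | h
    · rw [List.take_append_of_le_length h]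
      rcases lt_or_eq_of_le h with h' | h'
      · have := a2 k h'; omega
      · have hts : 1 ≤ j := hne (by rintro rfl; simp at hk; omega)
        rw [h', List.take_length]; omega
    · rw [List.take_append, List.sum_append,
        List.take_of_length_le (le_of_lt h)]
      have := b2 (k - A.length) (by omega)
      omega

theorem fp_node {ts : List PlaneTree} (h : FP ts.length (childCountsList ts)) :
    FP 1 (childCounts (node ts)) := by
  obtain ⟨h1, h2⟩ := h
  constructor
  · simp only [childCounts, List.sum_cons, List.length_cons]; omega
  · intro k hk
    simp only [childCounts, List.length_cons] at hk ⊢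
    match k with
    | 0 => simp
    | (i + 1) =>
        simp only [List.take_succ_cons, List.sum_cons]
        have := h2 i (by omega)
        omega

theorem fp_childCounts (T : PlaneTree) : FP 1 (childCounts T) := by
  refine PlaneTree.rec (motive_1 := fun T => FP 1 (childCounts T))
    (motive_2 := fun ts => FP ts.length (childCountsList ts)) ?_ ?_ ?_ T
  · exact fun ts h => fp_node h
  · exact ⟨rfl, by intro k hk; simp [childCountsList] at hk⟩
  · intro t ts ht hts
    exact fp_append ht hts (fun h => by
      rcases ts with _ | _
      · exact absurd rfl h
      · simp)

theorem fp_ccl (ts : List PlaneTree) : FP ts.length (childCountsList ts) := by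
  induction ts with
  | nil => exact ⟨rfl, by intro k hk; simp [childCountsList] at hk⟩
  | cons t ts ih =>
      exact fp_append (fp_childCounts t) ih (fun h => by
        rcases ts with _ | _
        · exact absurd rfl h
        · simp)

theorem cc_length_pos (T : PlaneTree) : 1 ≤ (childCounts T).length := by
  rcases T with ⟨ts⟩; simp [childCounts]

/-- Luka words have a unique parse break. -/
theorem luka_prefix_unique {A B A' B' : List ℕ} (hA : FP 1 A) (hA' : FP 1 A')
    (h : A ++ B = A' ++ B') : A = A' ∧ B = B' := by
  have hlen : A.length = A'.length := by
    rcases le_or_gt A.length A'.length with hle | hle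
    · by_contra hne
      have h1 : A.length < A'.length := lt_of_le_of_ne hle (fun e => hne e)
      have h2 : List.take A.length (A ++ B) = A := by
        rw [List.take_append_of_le_length le_rfl, List.take_length]
      have h3 : List.take A.length (A' ++ B') = List.take A.length A' := by
        rw [List.take_append_of_le_length (le_of_lt h1)]
      have := hA'.2 A.length h1
      rw [← h3, ← h, h2] at this
      have := hA.1
      omega
    · exfalso
      have h2 : List.take A'.length (A' ++ B') = A' := by
        rw [List.take_append_of_le_length le_rfl, List.take_length]
      have h3 : List.take A'.length (A ++ B) = List.take A'.length A := by
        rw [List.take_append_of_le_length (le_of_lt hle)]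
      have := hA.2 A'.length hle
      rw [← h3, h, h2] at this
      have := hA'.1
      omega
  exact List.append_inj h hlen

theorem ccl_injective : ∀ L : ℕ, ∀ ts1 ts2 : List PlaneTree,
    (childCountsList ts1).length ≤ L → childCountsList ts1 = childCountsList ts2 →
    ts1 = ts2 := by
  intro L
  induction L with
  | zero =>
      intro ts1 ts2 hL h
      have h1 : childCountsList ts1 = [] := List.length_eq_zero_iff.mp (by omega)
      exact (ccl_eq_nil h1).trans (ccl_eq_nil (h.symm.trans h1)).symm
  | succ L ih =>
      intro ts1 ts2 hL h
      rcases ts1 with _ | ⟨t1, ts1'⟩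
      · rw [← ccl_eq_nil (ts := ts2) h.symm]
      rcases ts2 with _ | ⟨t2, ts2'⟩
      · exact absurd (ccl_eq_nil h) (by simp)
      simp only [childCountsList] at h hL
      obtain ⟨hAB1, hAB2⟩ := luka_prefix_unique (fp_childCounts t1) (fp_childCounts t2) h
      have hlen1 := cc_length_pos t1
      rcases t1 with ⟨us1⟩; rcases t2 with ⟨us2⟩
      simp only [childCounts, List.cons.injEq] at hAB1
      obtain ⟨hlen, htail⟩ := hAB1
      have hus : us1 = us2 := by
        refine ih us1 us2 ?_ htail
        have := List.length_append (as := childCounts (node us1)) (bs := childCountsList ts1')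
        simp only [childCounts, List.length_cons] at hL ⊢
        rw [List.length_append] at hL
        simp only [childCounts, List.length_cons] at hL
        omega
      have hts : ts1' = ts2' := by
        refine ih ts1' ts2' ?_ hAB2
        rw [List.length_append] at hL
        have := cc_length_pos (node us1)
        omega
      rw [hus, hts]

theorem childCounts_injective {T1 T2 : PlaneTree}
    (h : childCounts T1 = childCounts T2) : T1 = T2 := by
  rcases T1 with ⟨ts1⟩; rcases T2 with ⟨ts2⟩
  simp only [childCounts, List.cons.injEq] at h
  rw [ccl_injective (childCountsList ts1).length ts1 ts2 le_rfl h.2]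

theorem sum_take_mono (l : List ℕ) {a b : ℕ} (h : a ≤ b) :
    (l.take a).sum ≤ (l.take b).sum := by
  conv_rhs => rw [← List.take_append_drop a (l.take b)]
  rw [List.sum_append, List.take_take, min_eq_left h]
  omega

theorem exists_forest : ∀ L : ℕ, ∀ l : List ℕ, l.length ≤ L → ∀ j : ℕ,
    FP j l → ∃ ts : List PlaneTree, ts.length = j ∧ childCountsList ts = l := by
  intro L
  induction L with
  | zero =>
      intro l hL j hfp
      have hl : l = [] := List.length_eq_zero_iff.mp (by omega)
      subst hl
      have : j = 0 := by simpa using hfp.1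
      exact ⟨[], by simp [this, childCountsList]⟩
  | succ L ih =>
      intro l hL j hfp
      obtain ⟨h1, h2⟩ := hfp
      rcases l with _ | ⟨c, l'⟩
      · have : j = 0 := by simpa using h1
        exact ⟨[], by simp [this, childCountsList]⟩
      have hj : 1 ≤ j := by have := h2 0 (by simp); simp at this; omega
      -- find the least break point
      have hex : ∃ k, k ≤ (c :: l').length ∧ (List.take k (c :: l')).sum + 1 ≤ k := by
        refine ⟨(c :: l').length, le_rfl, ?_⟩
        rw [List.take_length]
        omega
      classical
      set k₀ := Nat.find hex with hk₀def
      have hk₀le : k₀ ≤ (c :: l').length := (Nat.find_spec hex).1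
      have hk₀sum : (List.take k₀ (c :: l')).sum + 1 ≤ k₀ := (Nat.find_spec hex).2
      have hmin : ∀ i < k₀, i ≤ (List.take i (c :: l')).sum := by
        intro i hi
        have hnm := Nat.find_min hex (hk₀def ▸ hi)
        push_neg at hnm
        rcases le_or_gt i (c :: l').length with h | h
        · have := hnm h
          omega
        · rw [List.take_of_length_le (le_of_lt h)]
          omega
      have hk₀pos : 1 ≤ k₀ := by
        by_contra h
        have h0 : k₀ = 0 := by omega
        rw [h0] at hk₀sum
        simp at hk₀sum
      have hk₀eq : (List.take k₀ (c :: l')).sum + 1 = k₀ := by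
        have hprev := hmin (k₀ - 1) (by omega)
        have := sum_take_mono (c :: l') (show k₀ - 1 ≤ k₀ by omega)
        omega
      -- q = take (k₀ - 1) l'
      set q := List.take (k₀ - 1) l' with hq
      have hqlen : q.length = k₀ - 1 := by
        rw [hq, List.length_take]
        simp only [List.length_cons] at hk₀le
        omega
      have htakek₀ : List.take k₀ (c :: l') = c :: q := by
        rw [hq]
        match hk : k₀, hk₀pos with
        | (i+1), _ => simp [List.take_succ_cons]
      have hqfp : FP c q := by
        constructor
        · rw [htakek₀] at hk₀eq
          simp only [List.sum_cons] at hk₀eq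
          omega
        · intro i hi
          have := hmin (i + 1) (by omega)
          rw [List.take_succ_cons, List.sum_cons] at this
          have htt : List.take i q = List.take i l' := by
            rw [hq, List.take_take]
            congr 1
            omega
          rw [htt]
          rcases Nat.eq_or_lt_of_le this with h | h
          · omega
          · omega
      obtain ⟨us, huslen, husccl⟩ := ih q (by
        rw [hqlen]
        simp only [List.length_cons] at hL hk₀le
        omega) c hqfp
      -- remainder
      set r := List.drop k₀ (c :: l') with hr
      have hsplit : (c :: l') = List.take k₀ (c :: l') ++ r := (List.take_append_drop _ _).symm
      have hrlen : r.length = (c :: l').length - k₀ := by rw [hr, List.length_drop]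
      have hrfp : FP (j - 1) r := by
        constructor
        · have : (c :: l').sum = (List.take k₀ (c :: l')).sum + r.sum := by
            conv_lhs => rw [hsplit]
            rw [List.sum_append]
          simp only [List.length_cons] at *
          omega
        · intro i hi
          have hti : List.take (k₀ + i) (c :: l') = List.take k₀ (c :: l') ++ List.take i r := by
            rw [List.take_add]
          have := h2 (k₀ + i) (by omega)
          rw [hti, List.sum_append] at this
          omega
      obtain ⟨vs, hvslen, hvsccl⟩ := ih r (by
        rw [hrlen]
        simp only [List.length_cons] at hL ⊢
        omega) (j - 1) hrfp
      refine ⟨node us :: vs, ?_, ?_⟩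
      · simp only [List.length_cons]
        omega
      · simp only [childCountsList, childCounts, husccl, huslen, hvsccl]
        rw [← htakek₀, ← hsplit]

theorem exists_tree {l : List ℕ} (h : FP 1 l) :
    ∃ T : PlaneTree, childCounts T = l := by
  obtain ⟨ts, hlen, hccl⟩ := exists_forest l.length l le_rfl 1 h
  rcases ts with _ | ⟨t, ts'⟩
  · simp at hlen
  · have hts' : ts' = [] := by simpa using hlen
    subst hts'
    exact ⟨t, by simpa [childCountsList] using hccl⟩


theorem rot_take_low (l : List ℕ) {r k : ℕ} (hrk : r + k ≤ l.length) :
    ((l.rotate r).take k).sum + (l.take r).sum = (l.take (r + k)).sum := by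
  rw [List.rotate_eq_drop_append_take (by omega)]
  rw [List.take_append_of_le_length (by rw [List.length_drop]; omega)]
  rw [List.take_drop]
  conv_rhs => rw [← List.take_append_drop r (l.take (r + k))]
  rw [List.sum_append, List.take_take, min_eq_left (by omega)]
  omega

theorem rot_take_high (l : List ℕ) {r k : ℕ} (hr : r ≤ l.length)
    (hk1 : l.length - r ≤ k) (hk2 : k ≤ l.length) :
    ((l.rotate r).take k).sum + (l.take r).sum
      = l.sum + (l.take (k - (l.length - r))).sum := by
  rw [List.rotate_eq_drop_append_take hr]
  rw [List.take_append]
  rw [List.take_of_length_le (by rw [List.length_drop]; omega)]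
  rw [List.length_drop]
  rw [List.sum_append, List.take_take, min_eq_left (by omega)]
  have h : (l.take r).sum + (l.drop r).sum = l.sum := by
    rw [← List.sum_append, List.take_append_drop]
  omega

/-- extraction: if the rotation by `r` is a Łukasiewicz word, prefix-sum inequalities -/
theorem good_low {n : ℕ} {l : List ℕ} (hlen : l.length = n + 1) (hsum : l.sum = n)
    {r : ℕ} (hr : r < n + 1) (h : FP 1 (l.rotate r)) :
    ∀ i, r ≤ i → i ≤ n + 1 → (i < n + 1 ∨ 1 ≤ r) →
      (l.take r).sum + i ≤ (l.take i).sum + r := by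
  intro i hri hi hcase
  have hk : i - r < (l.rotate r).length := by
    rw [List.length_rotate, hlen]
    omega
  have := h.2 (i - r) (by rw [List.length_rotate, hlen]; rcases hcase with h | h <;> omega)
  have hlow := rot_take_low l (show r + (i - r) ≤ l.length by rw [hlen]; omega)
  rw [show r + (i - r) = i by omega] at hlow
  omega

theorem good_high {n : ℕ} {l : List ℕ} (hlen : l.length = n + 1) (hsum : l.sum = n)
    {r : ℕ} (hr : r < n + 1) (h : FP 1 (l.rotate r)) :
    ∀ j, 1 ≤ j → j < r → (l.take r).sum + j + 1 ≤ (l.take j).sum + r := by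
  intro j hj1 hjr
  set k := j + (n + 1 - r) with hk
  have hkm : k < n + 1 := by omega
  have := h.2 k (by rw [List.length_rotate, hlen]; omega)
  have hhigh := rot_take_high l (r := r) (k := k) (by rw [hlen]; omega)
    (by rw [hlen]; omega) (by rw [hlen]; omega)
  rw [hlen] at hhigh
  rw [show k - (n + 1 - r) = j by omega] at hhigh
  omega

theorem good_rotation_unique {n : ℕ} {l : List ℕ} (hlen : l.length = n + 1)
    (hsum : l.sum = n) {r1 r2 : ℕ} (hr1 : r1 < n + 1) (hr2 : r2 < n + 1)
    (h1 : FP 1 (l.rotate r1)) (h2 : FP 1 (l.rotate r2)) : r1 = r2 := by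
  by_contra hne
  wlog hlt : r1 < r2 generalizing r1 r2
  · exact this hr2 hr1 h2 h1 (Ne.symm hne) (by omega)
  rcases Nat.eq_zero_or_pos r1 with h0 | hpos
  · subst h0
    -- l itself is Luka; but rotation r2 ≥ 1 forces a low dip
    have ha := good_low hlen hsum hr2 h2 (n + 1) (by omega) le_rfl (Or.inr (by omega))
    -- (take r2).sum + (n+1) ≤ n + r2, i.e. S_{r2} ≤ r2 - 1
    have hb := good_low hlen hsum hr1 h1 r2 (by omega) (by omega) (Or.inl hr2)
    have hfull : (List.take (n + 1) l).sum = l.sum := by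
      rw [← hlen, List.take_length]
    simp only [List.take_zero, List.sum_nil] at ha hb
    omega
  · have ha := good_low hlen hsum hr1 h1 r2 (by omega) (by omega) (Or.inr hpos)
    have hb := good_high hlen hsum hr2 h2 r1 hpos hlt
    omega

theorem exists_good_rotation {n : ℕ} {l : List ℕ} (hlen : l.length = n + 1)
    (hsum : l.sum = n) : ∃ r < n + 1, FP 1 (l.rotate r) := by
  classical
  have hfpsum : ∀ r, (l.rotate r).sum = l.sum := fun r => (List.rotate_perm l r).sum_eq
  have hfplen : ∀ r, (l.rotate r).length = l.length := fun r => List.length_rotate l r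
  -- minimality predicate
  have hP : ∃ r, r ≤ n + 1 ∧ ∀ j ≤ n + 1, (l.take r).sum + j ≤ (l.take j).sum + r := by
    obtain ⟨r, hrmem, hrmin⟩ := Finset.exists_min_image (Finset.range (n + 2))
      (fun k => ((l.take k).sum : ℤ) - k) ⟨0, by simp⟩
    refine ⟨r, by simpa using Nat.lt_succ_iff.mp (Finset.mem_range.mp hrmem), fun j hj => ?_⟩
    have := hrmin j (Finset.mem_range.mpr (by omega))
    omega
  set r₀ := Nat.find hP with hr₀def
  have hspec := Nat.find_spec hP
  have hr₀le : r₀ ≤ n + 1 := hspec.1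
  have hr₀min : ∀ j ≤ n + 1, (l.take r₀).sum + j ≤ (l.take j).sum + r₀ := hspec.2
  have hstrict : ∀ j < r₀, j ≤ n + 1 → (l.take r₀).sum + j + 1 ≤ (l.take j).sum + r₀ := by
    intro j hj hjle
    have hnm := Nat.find_min hP (hr₀def ▸ hj)
    push_neg at hnm
    obtain ⟨i, hile, hi⟩ := hnm hjle
    have := hr₀min i hile
    omega
  have hr₀pos : 1 ≤ r₀ := by
    by_contra h
    have h0 : r₀ = 0 := by omega
    have := hr₀min (n + 1) le_rfl
    rw [h0] at this
    simp only [List.take_zero, List.sum_nil] at this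
    rw [← hlen, List.take_length] at this
    omega
  rcases Nat.lt_or_ge r₀ (n + 1) with hcase | hcase
  · refine ⟨r₀, hcase, ?_, ?_⟩
    · rw [hfpsum, hfplen, hsum, hlen]
    · intro k hk
      rw [hfplen, hlen] at hk
      rcases le_or_gt k (n + 1 - r₀) with hlow | hhigh
      · have := rot_take_low l (show r₀ + k ≤ l.length by rw [hlen]; omega)
        have := hr₀min (r₀ + k) (by omega)
        omega
      · have hh := rot_take_high l (r := r₀) (k := k) (by rw [hlen]; omega)
          (by rw [hlen]; omega) (by rw [hlen]; omega)
        rw [hlen] at hh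
        have hj := hstrict (k - (n + 1 - r₀)) (by omega) (by omega)
        omega
  · -- r₀ = n+1 : l itself is Luka
    have hr₀eq : r₀ = n + 1 := by omega
    refine ⟨0, by omega, ?_, ?_⟩
    · rw [hfpsum, hfplen, hsum, hlen]
    · intro k hk
      rw [hfplen, hlen] at hk
      rw [List.rotate_zero]
      rcases Nat.eq_zero_or_pos k with h0 | hkpos
      · simp [h0]
      · have := hstrict k (by omega) (by omega)
        rw [hr₀eq] at this
        rw [← hlen, List.take_length] at this
        omega


theorem getD_le_sum (l : List ℕ) (i : ℕ) : l.getD i 0 ≤ l.sum := by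
  rcases lt_or_ge i l.length with h | h
  · rw [List.getD_eq_getElem l 0 h]
    exact List.single_le_sum (fun x _ => Nat.zero_le x) _ (List.getElem_mem h)
  · rw [List.getD_eq_default l 0 h]
    exact Nat.zero_le _

theorem list_eq_of_getD {l1 l2 : List ℕ} (hlen : l1.length = l2.length)
    (h : ∀ i < l1.length, l1.getD i 0 = l2.getD i 0) : l1 = l2 := by
  apply List.ext_getElem hlen
  intro i h1 h2
  have := h i h1
  rwa [List.getD_eq_getElem l1 0 h1, List.getD_eq_getElem l2 0 h2] at this

end PlaneTree

open Finset MvPolynomial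

open Finset MvPolynomial PlaneTree

section Main

variable (n : ℕ)

/-- the per-vertex weight -/
noncomputable def wt (c : ℕ) (j : Fin (n + 1)) : MvPolynomial (Fin (n + 1)) ℚ :=
  C ((c.factorial : ℚ)⁻¹) * X j ^ c

/-- the weight of a tuple of child counts -/
noncomputable def Wt (c : Fin (n + 1) → ℕ) : MvPolynomial (Fin (n + 1)) ℚ :=
  ∑ σ : Equiv.Perm (Fin (n + 1)), ∏ i : Fin (n + 1), wt n (c i) (σ i)

theorem Wt_comp_perm (c : Fin (n + 1) → ℕ) (π : Equiv.Perm (Fin (n + 1))) :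
    Wt n (c ∘ π) = Wt n c := by
  unfold Wt
  have step1 : ∀ σ : Equiv.Perm (Fin (n + 1)),
      ∏ i : Fin (n + 1), wt n ((c ∘ π) i) (σ i)
        = ∏ i : Fin (n + 1), wt n (c i) ((σ * π⁻¹) i) := by
    intro σ
    rw [← Equiv.prod_comp π (fun j => wt n (c j) ((σ * π⁻¹) j))]
    refine Finset.prod_congr rfl (fun i _ => ?_)
    simp [Equiv.Perm.mul_apply, Function.comp]
  simp_rw [step1]
  exact Fintype.sum_bijective (fun σ => σ * π⁻¹) (Group.mulRight_bijective π⁻¹)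
    _ _ (fun σ => rfl)

open Fin.NatCast in
theorem Wt_rotate {l : List ℕ} (hlen : l.length = n + 1) (r : ℕ) :
    Wt n (fun i : Fin (n + 1) => (l.rotate r).getD (i : ℕ) 0)
      = Wt n (fun i : Fin (n + 1) => l.getD (i : ℕ) 0) := by
  have key : (fun i : Fin (n + 1) => (l.rotate r).getD (i : ℕ) 0)
      = (fun i : Fin (n + 1) => l.getD (i : ℕ) 0) ∘ (Equiv.addRight ((r : ℕ) : Fin (n + 1))) := by
    funext i
    have h1 : (i : ℕ) < (l.rotate r).length := by
      rw [List.length_rotate, hlen]; exact i.2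
    have h2 : ((i + (r : Fin (n + 1)) : Fin (n + 1)) : ℕ) < l.length := by
      rw [hlen]; exact (i + (r : Fin (n+1))).2
    rw [Function.comp_apply, Equiv.coe_addRight, List.getD_eq_getElem _ 0 h1,
      List.getD_eq_getElem _ 0 h2]
    rw [List.getElem_rotate]
    congr 1
    simp only [Fin.add_def, Fin.val_natCast, hlen]
    conv_lhs => rw [Nat.add_mod]
    conv_rhs => rw [Nat.add_mod, Nat.mod_mod]
  rw [key, Wt_comp_perm]

theorem rotate_back {m : ℕ} {l : List ℕ} (hlen : l.length = m) {r : ℕ} (hr : r < m) :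
    (l.rotate r).rotate ((m - r) % m) = l := by
  rw [List.rotate_rotate]
  rcases Nat.eq_zero_or_pos r with h0 | hpos
  · subst h0
    rw [Nat.sub_zero, Nat.mod_self, List.rotate_zero]
  · rw [Nat.mod_eq_of_lt (by omega), show r + (m - r) = m by omega, ← hlen,
      List.rotate_length]

theorem mod_sub_inj {m r1 r2 : ℕ} (h1 : r1 < m) (h2 : r2 < m)
    (h : (m - r1) % m = (m - r2) % m) : r1 = r2 := by
  have e : ∀ r : ℕ, r < m → (m - r) % m = if r = 0 then 0 else m - r := by
    intro r hr
    rcases Nat.eq_zero_or_pos r with h0 | hpos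
    · simp [h0, Nat.mod_self]
    · rw [Nat.mod_eq_of_lt (by omega), if_neg (by omega)]
  rw [e r1 h1, e r2 h2] at h
  split_ifs at h with a b b <;> omega

/-- Łukasiewicz words of length n+1 -/
abbrev LukaSub := {l : List ℕ // PlaneTree.FP 1 l ∧ l.length = n + 1}

/-- all lists of length n+1 with sum n -/
abbrev AllSub := {l : List ℕ // l.length = n + 1 ∧ l.sum = n}

theorem luka_sum {l : List ℕ} (h : PlaneTree.FP 1 l) (hlen : l.length = n + 1) :
    l.sum = n := by
  have := h.1
  omega

noncomputable def e1 : {T : PlaneTree // T.size = n + 1} ≃ LukaSub n :=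
  Equiv.ofBijective (fun T => ⟨T.1.childCounts, fp_childCounts T.1, T.2⟩)
    ⟨by
      rintro ⟨T1, h1⟩ ⟨T2, h2⟩ h
      exact Subtype.ext (childCounts_injective (Subtype.ext_iff.mp h)),
     by
      rintro ⟨l, hfp, hlen⟩
      obtain ⟨T, hT⟩ := exists_tree hfp
      exact ⟨⟨T, by rw [size, hT, hlen]⟩, Subtype.ext hT⟩⟩

noncomputable def e2 : LukaSub n × Fin (n + 1) ≃ AllSub n :=
  Equiv.ofBijective
    (fun p => ⟨p.1.1.rotate (p.2 : ℕ),
      by rw [List.length_rotate]; exact p.1.2.2,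
      by rw [(List.rotate_perm _ _).sum_eq]; exact luka_sum n p.1.2.1 p.1.2.2⟩)
    ⟨by
      rintro ⟨⟨l1, hfp1, hl1⟩, r1⟩ ⟨⟨l2, hfp2, hl2⟩, r2⟩ h
      have hval : l1.rotate (r1 : ℕ) = l2.rotate (r2 : ℕ) := Subtype.ext_iff.mp h
      have hLlen : (l1.rotate (r1 : ℕ)).length = n + 1 := by rw [List.length_rotate, hl1]
      have hLsum : (l1.rotate (r1 : ℕ)).sum = n := by
        rw [(List.rotate_perm _ _).sum_eq]; exact luka_sum n hfp1 hl1
      have hb1 : (l1.rotate (r1 : ℕ)).rotate ((n + 1 - (r1 : ℕ)) % (n + 1)) = l1 :=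
        rotate_back hl1 r1.2
      have hb2 : (l1.rotate (r1 : ℕ)).rotate ((n + 1 - (r2 : ℕ)) % (n + 1)) = l2 := by
        rw [hval]; exact rotate_back hl2 r2.2
      have hu := good_rotation_unique hLlen hLsum
        (Nat.mod_lt _ (by omega) : (n + 1 - (r1 : ℕ)) % (n + 1) < n + 1)
        (Nat.mod_lt _ (by omega) : (n + 1 - (r2 : ℕ)) % (n + 1) < n + 1)
        (by rw [hb1]; exact hfp1) (by rw [hb2]; exact hfp2)
      have hr : r1 = r2 := Fin.ext (mod_sub_inj r1.2 r2.2 hu)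
      have hl12 : l1 = l2 := by rw [← hb1, ← hb2, hu]
      subst hl12
      subst hr
      rfl
     , by
      rintro ⟨l, hlen, hsum⟩
      obtain ⟨r, hr, hfp⟩ := exists_good_rotation hlen hsum
      refine ⟨⟨⟨l.rotate r, hfp, by rw [List.length_rotate, hlen]⟩,
        ⟨(n + 1 - r) % (n + 1), Nat.mod_lt _ (by omega)⟩⟩, Subtype.ext ?_⟩
      exact rotate_back hlen hr⟩

theorem ofFn_getD {m : ℕ} {l : List ℕ} (hlen : l.length = m) :
    List.ofFn (fun i : Fin m => l.getD (i : ℕ) 0) = l := by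
  apply List.ext_getElem (by rw [List.length_ofFn, hlen])
  intro i h1 h2
  rw [List.getElem_ofFn]
  rw [List.getD_eq_getElem l 0 h2]

theorem sum_getD {m : ℕ} {l : List ℕ} (hlen : l.length = m) :
    ∑ i : Fin m, l.getD (i : ℕ) 0 = l.sum := by
  conv_rhs => rw [← ofFn_getD hlen]
  rw [List.sum_ofFn]

noncomputable def e3 : AllSub n ≃ {c : Fin (n + 1) → ℕ // c ∈ piAntidiag (univ : Finset (Fin (n + 1))) n} where
  toFun l := ⟨fun i => l.1.getD (i : ℕ) 0, by
    rw [mem_piAntidiag]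
    exact ⟨(sum_getD l.2.1).trans l.2.2, fun i _ => mem_univ i⟩⟩
  invFun c := ⟨List.ofFn c.1, by
    constructor
    · rw [List.length_ofFn]
    · rw [List.sum_ofFn]
      have := (mem_piAntidiag.mp c.2).1
      simpa using this⟩
  left_inv l := Subtype.ext (ofFn_getD l.2.1)
  right_inv c := by
    apply Subtype.ext
    funext i
    simp only
    rw [List.getD_eq_getElem _ 0 (by rw [List.length_ofFn]; exact i.2), List.getElem_ofFn]

noncomputable instance : Fintype (AllSub n) := Fintype.ofEquiv _ (e3 n).symm

noncomputable instance : Fintype (LukaSub n) :=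
  Fintype.ofInjective (fun l : LukaSub n =>
      (⟨l.1, l.2.2, luka_sum n l.2.1 l.2.2⟩ : AllSub n))
    (fun a b h => by
      apply Subtype.ext
      have h2 := Subtype.ext_iff.mp h
      exact h2)

noncomputable instance : Fintype {T : PlaneTree // T.size = n + 1} :=
  Fintype.ofEquiv _ (e1 n).symm

theorem sum_piAntidiag_Wt :
    ∑ c ∈ piAntidiag (univ : Finset (Fin (n + 1))) n, Wt n c
      = (n + 1).factorial •
        (C ((n.factorial : ℚ)⁻¹) * (∑ i : Fin (n + 1), X i) ^ n) := by
  unfold Wt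
  rw [Finset.sum_comm]
  have step : ∀ σ : Equiv.Perm (Fin (n + 1)),
      ∑ c ∈ piAntidiag (univ : Finset (Fin (n + 1))) n,
        ∏ i : Fin (n + 1), wt n (c i) (σ i)
      = ∑ c ∈ piAntidiag (univ : Finset (Fin (n + 1))) n,
        ∏ i : Fin (n + 1), wt n (c i) i := by
    intro σ
    refine Finset.sum_nbij' (fun c => c ∘ ⇑σ⁻¹) (fun c => c ∘ ⇑σ) ?_ ?_ ?_ ?_ ?_
    · intro c hc
      simp only [mem_piAntidiag] at hc ⊢
      refine ⟨?_, fun i _ => mem_univ i⟩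
      calc univ.sum (c ∘ ⇑σ⁻¹) = univ.sum c := by
            simpa [Function.comp] using Equiv.sum_comp σ⁻¹ c
        _ = n := hc.1
    · intro c hc
      simp only [mem_piAntidiag] at hc ⊢
      refine ⟨?_, fun i _ => mem_univ i⟩
      calc univ.sum (c ∘ ⇑σ) = univ.sum c := by
            simpa [Function.comp] using Equiv.sum_comp σ c
        _ = n := hc.1
    · intro c _; funext i; simp
    · intro c _; funext i; simp
    · intro c _
      rw [← Equiv.prod_comp σ (fun j => wt n ((c ∘ ⇑σ⁻¹) j) j)]
      refine Finset.prod_congr rfl (fun i _ => ?_)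
      simp
  simp_rw [step]
  rw [Finset.sum_const, Finset.card_univ, Fintype.card_perm, Fintype.card_fin]
  congr 1
  -- now the multinomial computation
  rw [Finset.sum_pow_eq_sum_piAntidiag (univ : Finset (Fin (n + 1))) X n, Finset.mul_sum]
  refine Finset.sum_congr rfl (fun c hc => ?_)
  have hcsum : ∑ i : Fin (n + 1), c i = n := (mem_piAntidiag.mp hc).1
  have hspec := Nat.multinomial_spec (univ : Finset (Fin (n + 1))) c
  rw [hcsum] at hspec
  unfold wt
  rw [Finset.prod_mul_distrib, ← map_prod C (fun i => ((c i).factorial : ℚ)⁻¹) univ]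
  rw [← mul_assoc]
  congr 1
  rw [show ((Nat.multinomial (univ : Finset (Fin (n + 1))) c : MvPolynomial (Fin (n + 1)) ℚ))
      = C ((Nat.multinomial (univ : Finset (Fin (n + 1))) c : ℚ)) from (map_natCast C _).symm]
  rw [← map_mul]
  congr 1
  have hfac : (∏ i : Fin (n + 1), ((c i).factorial : ℚ)) ≠ 0 :=
    Finset.prod_ne_zero_iff.mpr (fun i _ => Nat.cast_ne_zero.mpr (Nat.factorial_ne_zero _))
  have hn : ((n.factorial : ℚ)) ≠ 0 := Nat.cast_ne_zero.mpr (Nat.factorial_ne_zero _)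
  have hspecQ : (∏ i : Fin (n + 1), ((c i).factorial : ℚ))
      * (Nat.multinomial (univ : Finset (Fin (n + 1))) c : ℚ) = (n.factorial : ℚ) := by
    exact_mod_cast congrArg (Nat.cast : ℕ → ℚ) hspec
  rw [Finset.prod_inv_distrib]
  field_simp
  linarith [hspecQ]

end Main

/- Corollary A.2 of the paper: for `n ≥ 1`,
`(x₁+⋯+x_{n+1})^n = ∑_{T plane rooted tree on n+1 vertices} ∑_{σ ∈ S_{n+1}}
   x_{σ(root)}^{deg root}/deg(root)! ∏_{v ≠ root} x_{σ(v)}^{deg v - 1}/(deg v - 1)!`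
in `ℚ[x₁,…,x_{n+1}]`.  Vertices are identified with preorder positions
`0, …, n` (position `0` being the root), and for every vertex the relevant
exponent is its number of children: `deg(root)` for the root, `deg(v) - 1`
otherwise. -/
theorem plane_tree_cayley (n : ℕ) (hn : 1 ≤ n) :
    (∑ i : Fin (n + 1), X i : MvPolynomial (Fin (n + 1)) ℚ) ^ n =
      ∑ᶠ T : {T : PlaneTree // T.size = n + 1},
        ∑ σ : Equiv.Perm (Fin (n + 1)),
          ∏ i : Fin (n + 1),
            C (((T.1.childCounts.getD (i : ℕ) 0).factorial : ℚ)⁻¹) *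
              X (σ i) ^ T.1.childCounts.getD (i : ℕ) 0 := by
  classical
  rw [finsum_eq_sum_of_fintype]
  have h1 : (∑ T : {T : PlaneTree // T.size = n + 1},
      ∑ σ : Equiv.Perm (Fin (n + 1)),
        ∏ i : Fin (n + 1),
          C (((T.1.childCounts.getD (i : ℕ) 0).factorial : ℚ)⁻¹) *
            X (σ i) ^ T.1.childCounts.getD (i : ℕ) 0)
      = ∑ l : LukaSub n, Wt n (fun i : Fin (n + 1) => l.1.getD (i : ℕ) 0) :=
    Fintype.sum_equiv (e1 n) _ _ (fun T => rfl)
  rw [h1]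
  have h2 : (n + 1) • (∑ l : LukaSub n, Wt n (fun i : Fin (n + 1) => l.1.getD (i : ℕ) 0))
      = ∑ c ∈ piAntidiag (univ : Finset (Fin (n + 1))) n, Wt n c := by
    calc (n + 1) • (∑ l : LukaSub n, Wt n (fun i : Fin (n + 1) => l.1.getD (i : ℕ) 0))
        = ∑ l : LukaSub n, ∑ _r : Fin (n + 1),
            Wt n (fun i : Fin (n + 1) => l.1.getD (i : ℕ) 0) := by
          rw [Finset.smul_sum]
          refine Finset.sum_congr rfl (fun l _ => ?_)
          rw [Finset.sum_const, Finset.card_univ, Fintype.card_fin]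
      _ = ∑ p : LukaSub n × Fin (n + 1),
            Wt n (fun i : Fin (n + 1) => p.1.1.getD (i : ℕ) 0) := by
          exact (Fintype.sum_prod_type (f := fun p : LukaSub n × Fin (n + 1) =>
            Wt n (fun i : Fin (n + 1) => p.1.1.getD (i : ℕ) 0))).symm
      _ = ∑ p : LukaSub n × Fin (n + 1),
            Wt n (fun i : Fin (n + 1) => ((e2 n) p).1.getD (i : ℕ) 0) := by
          refine Finset.sum_congr rfl (fun p _ => ?_)
          exact (Wt_rotate n p.1.2.2 (p.2 : ℕ)).symm
      _ = ∑ l : AllSub n, Wt n (fun i : Fin (n + 1) => l.1.getD (i : ℕ) 0) :=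
          Fintype.sum_equiv (e2 n) _ _ (fun p => rfl)
      _ = ∑ c : {c : Fin (n + 1) → ℕ // c ∈ piAntidiag (univ : Finset (Fin (n + 1))) n},
            Wt n c.1 :=
          Fintype.sum_equiv (e3 n) _ _ (fun l => rfl)
      _ = ∑ c ∈ piAntidiag (univ : Finset (Fin (n + 1))) n, Wt n c :=
          Finset.sum_coe_sort _ _
  have h3 := sum_piAntidiag_Wt n
  rw [h3] at h2
  -- simplify the right-hand side of h2
  have hnfac : ((n.factorial : ℚ)) ≠ 0 := Nat.cast_ne_zero.mpr (Nat.factorial_ne_zero _)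
  have h4 : (n + 1).factorial •
      (C ((n.factorial : ℚ)⁻¹) * (∑ i : Fin (n + 1), X i) ^ n)
      = (n + 1) • ((∑ i : Fin (n + 1), X i : MvPolynomial (Fin (n + 1)) ℚ) ^ n) := by
    rw [Nat.factorial_succ, mul_smul]
    congr 1
    rw [nsmul_eq_mul]
    rw [show ((n.factorial : MvPolynomial (Fin (n + 1)) ℚ)) = C ((n.factorial : ℚ)) from
      (map_natCast C _).symm]
    rw [← mul_assoc, ← map_mul, mul_inv_cancel₀ hnfac, map_one, one_mul]
  rw [h4] at h2
  -- cancel the (n+1) • on both sides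
  have hcancel : Function.Injective
      (fun x : MvPolynomial (Fin (n + 1)) ℚ => (n + 1) • x) := by
    intro x y hxy
    simp only at hxy
    rw [← Nat.cast_smul_eq_nsmul ℚ, ← Nat.cast_smul_eq_nsmul ℚ] at hxy
    have h5 := congrArg (fun z : MvPolynomial (Fin (n + 1)) ℚ =>
      (((n + 1 : ℕ) : ℚ))⁻¹ • z) hxy
    simpa [smul_smul, inv_mul_cancel₀ (show ((n : ℚ) + 1) ≠ 0 by positivity)] using h5
  exact (hcancel h2).symm
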